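/- Let λ>0, c>0, Δ>0 and set u(x,y)=c²Δ²−x²−y² on the open disc D={(x,y): x²+y²<c²Δ²}. Then the Fisher information of one observation equals (λ/(2πc)) ∬_D [e^{−λΔ+(λ/c)√(u(x,y))}/√(u(x,y))] · (1/λ − Δ + √(u(x,y))/c)² dx dy = (1/λ²) (1 − e^{−λΔ}(1+λ²Δ²)). -/

import Mathlib

open MeasureTheory Real Set

/-- The one-dimensional integral obtained after polar coordinates and the radial
substitution `s = √(c²Δ² - r²)`. -/
private lemma radial_integral_eval (lam c Δ : ℝ) (hlam : 0 < lam) (hc : 0 < c) :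
    ∫ s in (0:ℝ)..(c * Δ), Real.exp (-lam * Δ + lam / c * s) * (1 / lam - Δ + s / c) ^ 2
      = c / lam ^ 3 - Real.exp (-lam * Δ) * (c / lam ^ 3 + c * Δ ^ 2 / lam) := by
  have hc' : c ≠ 0 := hc.ne'
  have hlam' : lam ≠ 0 := hlam.ne'
  have h := intervalIntegral.integral_eq_sub_of_hasDerivAt (a := (0:ℝ)) (b := c * Δ)
    (f := fun s => Real.exp (-lam * Δ + lam / c * s) *
      (s ^ 2 / (lam * c) - 2 * Δ / lam * s + (c / lam ^ 3 + c * Δ ^ 2 / lam)))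
    (f' := fun s => Real.exp (-lam * Δ + lam / c * s) * (1 / lam - Δ + s / c) ^ 2)
    (fun s _ => by
      have hL : HasDerivAt (fun s : ℝ => -lam * Δ + lam / c * s) (lam / c) s := by
        simpa using ((hasDerivAt_id s).const_mul (lam / c)).const_add (-lam * Δ)
      have hE : HasDerivAt (fun s : ℝ => Real.exp (-lam * Δ + lam / c * s))
          (Real.exp (-lam * Δ + lam / c * s) * (lam / c)) s := hL.exp
      have hQ : HasDerivAt (fun s : ℝ =>
          s ^ 2 / (lam * c) - 2 * Δ / lam * s + (c / lam ^ 3 + c * Δ ^ 2 / lam))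
          (2 * s / (lam * c) - 2 * Δ / lam) s := by
        have h1 := (hasDerivAt_pow 2 s).div_const (lam * c)
        have h2 := (hasDerivAt_id s).const_mul (2 * Δ / lam)
        have h3 := (h1.sub h2).add_const (c / lam ^ 3 + c * Δ ^ 2 / lam)
        simpa [pow_one, mul_comm] using h3
      have := hE.mul hQ
      convert this using 1
      · rfl
      · rfl
      field_simp
      ring)
    (by
      apply Continuous.intervalIntegrable
      fun_prop)
  rw [h]
  have e1 : -lam * Δ + lam / c * (c * Δ) = 0 := by field_simp; ring
  have e2 : -lam * Δ + lam / c * 0 = -lam * Δ := by ring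
  rw [e1, e2, Real.exp_zero]
  field_simp
  ring

/-- Substituting `s = √(c²Δ² − r²)` in the radial integral. -/
private lemma radial_substitution (lam c Δ : ℝ) (hlam : 0 < lam) (hc : 0 < c) (hΔ : 0 < Δ) :
    ∫ r in Ioo (0:ℝ) (c * Δ),
        r * (Real.exp (-lam * Δ + lam / c * Real.sqrt (c ^ 2 * Δ ^ 2 - r ^ 2)) /
            Real.sqrt (c ^ 2 * Δ ^ 2 - r ^ 2) *
          (1 / lam - Δ + Real.sqrt (c ^ 2 * Δ ^ 2 - r ^ 2) / c) ^ 2)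
      = ∫ s in Ioo (0:ℝ) (c * Δ),
          Real.exp (-lam * Δ + lam / c * s) * (1 / lam - Δ + s / c) ^ 2 := by
  set R := c * Δ with hRdef
  have hR : 0 < R := mul_pos hc hΔ
  have hRsq : c ^ 2 * Δ ^ 2 = R ^ 2 := by rw [hRdef]; ring
  set φ : ℝ → ℝ := fun s => Real.sqrt (R ^ 2 - s ^ 2) with hφdef
  have hsub : ∀ s ∈ Ioo (0:ℝ) R, 0 < R ^ 2 - s ^ 2 := by
    rintro s ⟨h0, h1⟩; nlinarith
  have himg : φ '' Ioo (0:ℝ) R = Ioo (0:ℝ) R := by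
    ext r
    constructor
    · rintro ⟨s, hs, rfl⟩
      have h1 := hsub s hs
      refine ⟨Real.sqrt_pos.2 h1, ?_⟩
      have : Real.sqrt (R ^ 2 - s ^ 2) < Real.sqrt (R ^ 2) := by
        apply Real.sqrt_lt_sqrt (le_of_lt h1)
        nlinarith [hs.1]
      simpa [Real.sqrt_sq hR.le] using this
    · rintro ⟨h0, h1⟩
      refine ⟨Real.sqrt (R ^ 2 - r ^ 2), ?_, ?_⟩
      · have h2 : 0 < R ^ 2 - r ^ 2 := by nlinarith
        refine ⟨Real.sqrt_pos.2 h2, ?_⟩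
        have : Real.sqrt (R ^ 2 - r ^ 2) < Real.sqrt (R ^ 2) := by
          apply Real.sqrt_lt_sqrt (le_of_lt h2); nlinarith
        simpa [Real.sqrt_sq hR.le] using this
      · have h2 : (0:ℝ) ≤ R ^ 2 - r ^ 2 := by nlinarith
        simp only [hφdef]
        rw [Real.sq_sqrt h2]
        have : R ^ 2 - (R ^ 2 - r ^ 2) = r ^ 2 := by ring
        rw [this, Real.sqrt_sq h0.le]
  have hderiv : ∀ s ∈ Ioo (0:ℝ) R,
      HasDerivWithinAt φ (-s / Real.sqrt (R ^ 2 - s ^ 2)) (Ioo (0:ℝ) R) s := by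
    intro s hs
    have h1 := hsub s hs
    have hin : HasDerivAt (fun s : ℝ => R ^ 2 - s ^ 2) (-(2 * s)) s := by
      simpa using ((hasDerivAt_pow 2 s).const_sub (R ^ 2))
    have h2 : HasDerivAt φ (-(2 * s) / (2 * Real.sqrt (R ^ 2 - s ^ 2))) s :=
      hin.sqrt h1.ne'
    have h3 : -(2 * s) / (2 * Real.sqrt (R ^ 2 - s ^ 2)) = -s / Real.sqrt (R ^ 2 - s ^ 2) := by
      have : Real.sqrt (R ^ 2 - s ^ 2) ≠ 0 := (Real.sqrt_pos.2 h1).ne'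
      field_simp
    rw [h3] at h2
    exact h2.hasDerivWithinAt
  have hinj : InjOn φ (Ioo (0:ℝ) R) := by
    rintro a ⟨ha0, haR⟩ b ⟨hb0, hbR⟩ hab
    have h1 := hsub a ⟨ha0, haR⟩
    have h2 := hsub b ⟨hb0, hbR⟩
    have h3 : R ^ 2 - a ^ 2 = R ^ 2 - b ^ 2 := by
      have := congrArg (fun x => x ^ 2) hab
      simpa [hφdef, Real.sq_sqrt h1.le, Real.sq_sqrt h2.le] using this
    have h4 : a ^ 2 = b ^ 2 := by linarith
    nlinarith [sq_nonneg (a - b), sq_nonneg (a + b)]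
  calc
    ∫ r in Ioo (0:ℝ) R,
        r * (Real.exp (-lam * Δ + lam / c * Real.sqrt (c ^ 2 * Δ ^ 2 - r ^ 2)) /
            Real.sqrt (c ^ 2 * Δ ^ 2 - r ^ 2) *
          (1 / lam - Δ + Real.sqrt (c ^ 2 * Δ ^ 2 - r ^ 2) / c) ^ 2)
      = ∫ r in φ '' Ioo (0:ℝ) R,
          r * (Real.exp (-lam * Δ + lam / c * Real.sqrt (R ^ 2 - r ^ 2)) /
              Real.sqrt (R ^ 2 - r ^ 2) *
            (1 / lam - Δ + Real.sqrt (R ^ 2 - r ^ 2) / c) ^ 2) := by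
        rw [himg, hRsq]
    _ = ∫ s in Ioo (0:ℝ) R,
          |(-s / Real.sqrt (R ^ 2 - s ^ 2))| •
            (φ s * (Real.exp (-lam * Δ + lam / c * Real.sqrt (R ^ 2 - (φ s) ^ 2)) /
                Real.sqrt (R ^ 2 - (φ s) ^ 2) *
              (1 / lam - Δ + Real.sqrt (R ^ 2 - (φ s) ^ 2) / c) ^ 2)) := by
        exact integral_image_eq_integral_abs_deriv_smul measurableSet_Ioo hderiv hinj _
    _ = ∫ s in Ioo (0:ℝ) R,
          Real.exp (-lam * Δ + lam / c * s) * (1 / lam - Δ + s / c) ^ 2 := by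
        apply setIntegral_congr_fun measurableSet_Ioo
        intro s hs
        dsimp only
        have h1 := hsub s hs
        have hφpos : 0 < φ s := Real.sqrt_pos.2 h1
        have hback : R ^ 2 - (φ s) ^ 2 = s ^ 2 := by
          simp only [hφdef]; rw [Real.sq_sqrt h1.le]; ring
        have hss : Real.sqrt (R ^ 2 - (φ s) ^ 2) = s := by
          rw [hback, Real.sqrt_sq hs.1.le]
        rw [hss]
        have habs : |(-s / Real.sqrt (R ^ 2 - s ^ 2))| = s / φ s := by
          rw [abs_div, abs_neg, abs_of_pos hs.1, abs_of_pos hφpos]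
        rw [habs, smul_eq_mul]
        field_simp [hs.1.ne', hφpos.ne']

/-- Fisher information of one observation of a planar random flight at time step `Δ`
(Theorem 3.3): the integral of the squared score against the density equals
`(1/λ²)(1 − e^{−λΔ}(1 + λ²Δ²))`. -/
theorem fisher_information_eval (lam c Δ : ℝ) (hlam : 0 < lam) (hc : 0 < c) (hΔ : 0 < Δ) :
    lam / (2 * π * c) *
      ∫ q in {q : ℝ × ℝ | q.1 ^ 2 + q.2 ^ 2 < c ^ 2 * Δ ^ 2},
        Real.exp (-lam * Δ + lam / c * Real.sqrt (c ^ 2 * Δ ^ 2 - q.1 ^ 2 - q.2 ^ 2)) /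
            Real.sqrt (c ^ 2 * Δ ^ 2 - q.1 ^ 2 - q.2 ^ 2) *
          (1 / lam - Δ + Real.sqrt (c ^ 2 * Δ ^ 2 - q.1 ^ 2 - q.2 ^ 2) / c) ^ 2
      = 1 / lam ^ 2 * (1 - Real.exp (-lam * Δ) * (1 + lam ^ 2 * Δ ^ 2)) := by
  have hR : 0 < c * Δ := mul_pos hc hΔ
  set f : ℝ × ℝ → ℝ := fun q =>
    Real.exp (-lam * Δ + lam / c * Real.sqrt (c ^ 2 * Δ ^ 2 - q.1 ^ 2 - q.2 ^ 2)) /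
        Real.sqrt (c ^ 2 * Δ ^ 2 - q.1 ^ 2 - q.2 ^ 2) *
      (1 / lam - Δ + Real.sqrt (c ^ 2 * Δ ^ 2 - q.1 ^ 2 - q.2 ^ 2) / c) ^ 2 with hfdef
  set H : ℝ → ℝ := fun r =>
    Real.exp (-lam * Δ + lam / c * Real.sqrt (c ^ 2 * Δ ^ 2 - r ^ 2)) /
        Real.sqrt (c ^ 2 * Δ ^ 2 - r ^ 2) *
      (1 / lam - Δ + Real.sqrt (c ^ 2 * Δ ^ 2 - r ^ 2) / c) ^ 2 with hHdef
  have hS : MeasurableSet {q : ℝ × ℝ | q.1 ^ 2 + q.2 ^ 2 < c ^ 2 * Δ ^ 2} := by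
    apply measurableSet_lt <;> fun_prop
  have hT : MeasurableSet {p : ℝ × ℝ | p.1 < c * Δ} := by
    apply measurableSet_lt <;> fun_prop
  have key : (∫ q in {q : ℝ × ℝ | q.1 ^ 2 + q.2 ^ 2 < c ^ 2 * Δ ^ 2}, f q)
      = (2 * π) * ∫ r in Ioo (0:ℝ) (c * Δ), r * H r := by
    rw [← integral_indicator hS, ← integral_comp_polarCoord_symm]
    have step1 : ∀ p ∈ polarCoord.target,
        p.1 • ({q : ℝ × ℝ | q.1 ^ 2 + q.2 ^ 2 < c ^ 2 * Δ ^ 2}.indicator f) (polarCoord.symm p)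
          = {p : ℝ × ℝ | p.1 < c * Δ}.indicator (fun p => p.1 * H p.1) p := by
      rintro ⟨r, θ⟩ hp
      simp only [polarCoord_target, mem_prod, mem_Ioi, mem_Ioo] at hp
      obtain ⟨hr, -⟩ := hp
      have hsymm : polarCoord.symm (r, θ) = (r * Real.cos θ, r * Real.sin θ) := rfl
      have hsq : (r * Real.cos θ) ^ 2 + (r * Real.sin θ) ^ 2 = r ^ 2 := by
        have := Real.sin_sq_add_cos_sq θ
        nlinarith
      have hval : c ^ 2 * Δ ^ 2 - (r * Real.cos θ) ^ 2 - (r * Real.sin θ) ^ 2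
          = c ^ 2 * Δ ^ 2 - r ^ 2 := by linarith
      have hmem : ((r * Real.cos θ, r * Real.sin θ) ∈
          {q : ℝ × ℝ | q.1 ^ 2 + q.2 ^ 2 < c ^ 2 * Δ ^ 2}) ↔ r < c * Δ := by
        simp only [mem_setOf_eq, hsq]
        constructor
        · intro h; nlinarith
        · intro h; nlinarith
      rw [hsymm]
      by_cases h : r < c * Δ
      · rw [Set.indicator_of_mem (hmem.2 h), Set.indicator_of_mem (by exact h)]
        simp only [smul_eq_mul, hfdef, hHdef, hval]
      · rw [Set.indicator_of_notMem (fun hh => h (hmem.1 hh)),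
          Set.indicator_of_notMem (by exact h)]
        simp only [smul_eq_mul, mul_zero]
    rw [setIntegral_congr_fun polarCoord.open_target.measurableSet step1,
      setIntegral_indicator hT]
    have hset : polarCoord.target ∩ {p : ℝ × ℝ | p.1 < c * Δ}
        = Ioo (0:ℝ) (c * Δ) ×ˢ Ioo (-π) π := by
      ext ⟨r, θ⟩
      simp only [polarCoord_target, mem_inter_iff, mem_prod, mem_Ioi, mem_Ioo, mem_setOf_eq]
      tauto
    rw [hset, Measure.volume_eq_prod]
    have hθ : (∫ _ in Ioo (-π) π, (1:ℝ)) = 2 * π := by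
      simp only [setIntegral_const, smul_eq_mul, mul_one, Real.volume_Ioo]
      rw [Real.volume_real_Ioo_of_le (by linarith [Real.pi_pos])]; ring
    have hprod := setIntegral_prod_mul (μ := (volume : Measure ℝ))
      (ν := (volume : Measure ℝ)) (fun r => r * H r) (fun _ : ℝ => (1:ℝ))
      (Ioo (0:ℝ) (c * Δ)) (Ioo (-π) π)
    simp only [mul_one] at hprod
    rw [hprod, hθ]
    ring
  rw [key]
  have hsubst := radial_substitution lam c Δ hlam hc hΔ
  have : (∫ r in Ioo (0:ℝ) (c * Δ), r * H r)
      = ∫ s in Ioo (0:ℝ) (c * Δ),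
          Real.exp (-lam * Δ + lam / c * s) * (1 / lam - Δ + s / c) ^ 2 := by
    rw [← hsubst]
  rw [this]
  have hIoo : (∫ s in Ioo (0:ℝ) (c * Δ),
      Real.exp (-lam * Δ + lam / c * s) * (1 / lam - Δ + s / c) ^ 2)
      = ∫ s in (0:ℝ)..(c * Δ),
          Real.exp (-lam * Δ + lam / c * s) * (1 / lam - Δ + s / c) ^ 2 := by
    rw [intervalIntegral.integral_of_le hR.le, ← integral_Ioc_eq_integral_Ioo]
  rw [hIoo, radial_integral_eval lam c Δ hlam hc]
  have hπ : (π : ℝ) ≠ 0 := Real.pi_ne_zero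
  field_simp
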